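/- arXiv:2408.06824 — 4 statements merged into one kernel-verified Lean document; each statement's English description precedes it below -/
import Mathlib

section
/- For p ≥ 1 and s ≥ 0, the supremum over t ≥ 0 of st − Φ_p(t) is attained at t = exp(s^{1/p}) − 1, and the Legendre transform equals Φ_p*(s) = p ∫₀^{exp(s^{1/p})−1} (log(1+x))^{p−1} dx − s. -/
open MeasureTheory

noncomputable def Phi (p t : ℝ) : ℝ :=
  (1 + t) * (Real.log (1 + t)) ^ p - p * ∫ x in (0:ℝ)..t, (Real.log (1 + x)) ^ (p - 1)

theorem Phi_legendre_transform (p s : ℝ) (hp : 1 ≤ p) (hs : 0 ≤ s)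
    (T : ℝ) (hT : T = Real.exp (s ^ (1 / p)) - 1) :
    s * T - Phi p T = p * (∫ x in (0:ℝ)..T, (Real.log (1 + x)) ^ (p - 1)) - s ∧
      IsGreatest ((fun t => s * t - Phi p t) '' Set.Ici 0)
        (p * (∫ x in (0:ℝ)..T, (Real.log (1 + x)) ^ (p - 1)) - s) := by
  have hp0 : (0:ℝ) < p := lt_of_lt_of_le one_pos hp
  set f : ℝ → ℝ := fun x => (Real.log (1 + x)) ^ (p - 1) with hf_def
  -- continuity of f on (-1, ∞)
  have hfc : ∀ x : ℝ, -1 < x → ContinuousAt f x := by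
    intro x hx
    rcases eq_or_lt_of_le hp with hp1 | hp1
    · have : f = fun _ => (1:ℝ) := by
        funext y; simp [hf_def, ← hp1]
      rw [this]; exact continuousAt_const
    · have h1 : ContinuousAt (fun y : ℝ => Real.log (1 + y)) x := by
        have : (1 : ℝ) + x ≠ 0 := by linarith
        exact (Real.continuousAt_log this).comp (by fun_prop)
      exact (Real.continuousAt_rpow_const _ _ (Or.inr (by linarith))).comp h1
  have hT1 : (1:ℝ) + T = Real.exp (s ^ (1 / p)) := by rw [hT]; ring
  have hlogT : Real.log (1 + T) = s ^ (1 / p) := by rw [hT1, Real.log_exp]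
  have hT0 : 0 ≤ T := by
    rw [hT]; simp only [sub_nonneg, ← Real.exp_zero]
    exact Real.exp_le_exp.mpr (Real.rpow_nonneg hs _)
  have hsp : (s ^ (1 / p)) ^ p = s := by
    rw [← Real.rpow_mul hs, one_div_mul_cancel (ne_of_gt hp0), Real.rpow_one]
  have hlogTp : (Real.log (1 + T)) ^ p = s := by rw [hlogT, hsp]
  -- first part
  have heq : s * T - Phi p T
      = p * (∫ x in (0:ℝ)..T, (Real.log (1 + x)) ^ (p - 1)) - s := by
    simp only [Phi, hlogTp]; ring
  refine ⟨heq, ?_, ?_⟩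
  · exact ⟨T, hT0, heq⟩
  -- upper bound
  rintro y ⟨t, ht, rfl⟩
  rw [← heq]
  -- derivative of g
  have hderiv : ∀ a : ℝ, -1 < a →
      HasDerivAt (fun t => s * t - Phi p t) (s - (Real.log (1 + a)) ^ p) a := by
    intro a ha
    have hne : (1 : ℝ) + a ≠ 0 := by linarith
    have h1 : HasDerivAt (fun t : ℝ => 1 + t) 1 a := (hasDerivAt_id a).const_add 1
    have hlog : HasDerivAt (fun t : ℝ => Real.log (1 + t)) (1 / (1 + a)) a := h1.log hne
    have hpow : HasDerivAt (fun t : ℝ => (Real.log (1 + t)) ^ p)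
        (1 / (1 + a) * p * (Real.log (1 + a)) ^ (p - 1)) a :=
      hlog.rpow_const (Or.inr hp)
    have hprod := h1.mul hpow
    have hint : HasDerivAt (fun t : ℝ => ∫ x in (0:ℝ)..t, f x) (f a) a := by
      refine intervalIntegral.integral_hasDerivAt_right ?_ ?_ (hfc a ha)
      · apply ContinuousOn.intervalIntegrable
        intro x hx
        have hx' : -1 < x := by
          rcases Set.mem_uIcc.mp hx with h | h
          · linarith [h.1]
          · linarith [h.1]
        exact (hfc x hx').continuousWithinAt
      · exact ContinuousAt.stronglyMeasurableAtFilter isOpen_Ioi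
          (fun x hx => hfc x hx) a (Set.mem_Ioi.mpr ha)
    have := (((hasDerivAt_id a).const_mul s).sub (hprod.sub (hint.const_mul p)))
    have harith : s * 1 - (1 * (Real.log (1 + a)) ^ p +
        (1 + a) * (1 / (1 + a) * p * (Real.log (1 + a)) ^ (p - 1)) - p * f a)
        = s - (Real.log (1 + a)) ^ p := by
      have : (1 + a) * (1 / (1 + a) * p * (Real.log (1 + a)) ^ (p - 1))
          = p * (Real.log (1 + a)) ^ (p - 1) := by field_simp
      rw [this]; simp only [hf_def]; ring
    rw [harith] at this
    exact this.congr_of_eventuallyEq (by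
      filter_upwards with t; simp only [Phi, hf_def, id_eq, Pi.sub_apply, Pi.mul_apply])
  have hdiff : ∀ a : ℝ, -1 < a → DifferentiableAt ℝ (fun t => s * t - Phi p t) a :=
    fun a ha => (hderiv a ha).differentiableAt
  have hderiv_eq : ∀ a : ℝ, -1 < a →
      deriv (fun t => s * t - Phi p t) a = s - (Real.log (1 + a)) ^ p :=
    fun a ha => (hderiv a ha).deriv
  rcases le_total t T with htT | htT
  · -- monotone on [0, T]
    have hmono : MonotoneOn (fun t => s * t - Phi p t) (Set.Icc 0 T) := by
      apply monotoneOn_of_deriv_nonneg (convex_Icc 0 T)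
      · intro x hx
        exact (hdiff x (by linarith [hx.1])).continuousAt.continuousWithinAt
      · intro x hx
        rw [interior_Icc] at hx
        exact (hdiff x (by linarith [hx.1])).differentiableWithinAt
      · intro x hx
        rw [interior_Icc] at hx
        rw [hderiv_eq x (by linarith [hx.1])]
        have hlx : 0 ≤ Real.log (1 + x) := Real.log_nonneg (by linarith [hx.1])
        have hle : Real.log (1 + x) ≤ s ^ (1 / p) := by
          rw [← hlogT]
          exact Real.log_le_log (by linarith [hx.1]) (by linarith [hx.2])
        have := Real.rpow_le_rpow hlx hle (le_of_lt hp0)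
        rw [hsp] at this; linarith
    exact hmono ⟨ht, htT⟩ ⟨hT0, le_refl T⟩ htT
  · -- antitone on [T, ∞)
    have hanti : AntitoneOn (fun t => s * t - Phi p t) (Set.Ici T) := by
      apply antitoneOn_of_deriv_nonpos (convex_Ici T)
      · intro x hx
        exact (hdiff x (by simp at hx; linarith)).continuousAt.continuousWithinAt
      · intro x hx
        rw [interior_Ici] at hx
        exact (hdiff x (by simp at hx; linarith)).differentiableWithinAt
      · intro x hx
        rw [interior_Ici] at hx
        simp only [Set.mem_Ioi] at hx
        rw [hderiv_eq x (by linarith)]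
        have hle : s ^ (1 / p) ≤ Real.log (1 + x) := by
          rw [← hlogT]
          exact Real.log_le_log (by linarith) (by linarith)
        have := Real.rpow_le_rpow (Real.rpow_nonneg hs _) hle (le_of_lt hp0)
        rw [hsp] at this; linarith
    exact hanti (Set.self_mem_Ici) htT htT
end

section
/- For p ≥ 1 and all s ≥ 0, the Legendre transform satisfies Φ_p*(s) ≤ (exp(s^{1/p}) − 1)·s ≤ exp(c_p s^{1/p}), where c_p = p/e + 1. -/
open MeasureTheory

noncomputable def PhiStar (p s : ℝ) : ℝ :=
  sSup ((fun t => s * t - Phi p t) '' Set.Ici 0)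

lemma logp_monoOn (p : ℝ) (hp : 0 ≤ p) :
    MonotoneOn (fun x => Real.log (1 + x) ^ p) (Set.Ici (0:ℝ)) := by
  intro x hx y hy hxy
  have hx' : (0:ℝ) ≤ x := hx
  have hy' : (0:ℝ) ≤ y := hy
  exact Real.rpow_le_rpow (Real.log_nonneg (by linarith))
    (Real.log_le_log (by linarith) (by linarith)) hp

lemma logp_intInt (p : ℝ) (hp : 0 ≤ p) {a b : ℝ} (ha : 0 ≤ a) (hab : a ≤ b) :
    IntervalIntegrable (fun x => Real.log (1 + x) ^ p) volume a b := by
  apply MonotoneOn.intervalIntegrable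
  apply (logp_monoOn p hp).mono
  rw [Set.uIcc_of_le hab]
  intro x hx
  exact le_trans ha hx.1

lemma hasDeriv_aux (p : ℝ) (hp : 1 ≤ p) {x : ℝ} (hx : 0 < 1 + x) :
    HasDerivAt (fun y => (1 + y) * Real.log (1 + y) ^ p)
      (Real.log (1 + x) ^ p + p * Real.log (1 + x) ^ (p - 1)) x := by
  have h1 : HasDerivAt (fun y : ℝ => 1 + y) 1 x := by
    simpa using (hasDerivAt_id x).const_add 1
  have h2 : HasDerivAt (fun y => Real.log (1 + y)) (1 / (1 + x)) x := by
    have := (Real.hasDerivAt_log (ne_of_gt hx)).comp x h1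
    simpa [one_div, Function.comp_def] using this
  have h3 : HasDerivAt (fun y => Real.log (1 + y) ^ p)
      (p * Real.log (1 + x) ^ (p - 1) * (1 / (1 + x))) x := by
    have h4 := Real.hasDerivAt_rpow_const (x := Real.log (1 + x)) (p := p) (Or.inr hp)
    exact h4.comp x h2
  have h5 := h1.mul h3
  refine h5.congr_deriv ?_
  rw [one_mul, mul_comm (1 + x), mul_assoc, one_div_mul_cancel (ne_of_gt hx), mul_one]

lemma Phi_eq_integral (p : ℝ) (hp : 1 ≤ p) {t : ℝ} (ht : 0 ≤ t) :
    Phi p t = ∫ x in (0:ℝ)..t, Real.log (1 + x) ^ p := by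
  have hp0 : (0:ℝ) < p := lt_of_lt_of_le one_pos hp
  have hint1 : IntervalIntegrable (fun x => Real.log (1 + x) ^ p) volume 0 t :=
    logp_intInt p hp0.le le_rfl ht
  have hint2 : IntervalIntegrable (fun x => Real.log (1 + x) ^ (p - 1)) volume 0 t :=
    logp_intInt (p - 1) (by linarith) le_rfl ht
  have key : ∫ x in (0:ℝ)..t, (Real.log (1 + x) ^ p + p * Real.log (1 + x) ^ (p - 1))
      = (1 + t) * Real.log (1 + t) ^ p - (1 + 0) * Real.log (1 + 0) ^ p := by
    apply intervalIntegral.integral_eq_sub_of_hasDerivAt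
    · intro x hx
      rw [Set.uIcc_of_le ht] at hx
      exact hasDeriv_aux p hp (by linarith [hx.1])
    · exact hint1.add (hint2.const_mul p)
  have hsplit : ∫ x in (0:ℝ)..t, (Real.log (1 + x) ^ p + p * Real.log (1 + x) ^ (p - 1))
      = (∫ x in (0:ℝ)..t, Real.log (1 + x) ^ p)
        + p * ∫ x in (0:ℝ)..t, Real.log (1 + x) ^ (p - 1) := by
    rw [intervalIntegral.integral_add hint1 (hint2.const_mul p),
      intervalIntegral.integral_const_mul]
  have hz : Real.log (1 + 0) ^ p = 0 := by
    simp [Real.zero_rpow (ne_of_gt hp0)]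
  rw [hsplit, hz] at key
  unfold Phi
  linarith [key]

lemma Phi_nonneg (p : ℝ) (hp : 1 ≤ p) {t : ℝ} (ht : 0 ≤ t) : 0 ≤ Phi p t := by
  rw [Phi_eq_integral p hp ht]
  apply intervalIntegral.integral_nonneg ht
  intro x hx
  exact Real.rpow_nonneg (Real.log_nonneg (by linarith [hx.1])) p

theorem PhiStar_bound (p s : ℝ) (hp : 1 ≤ p) (hs : 0 ≤ s) :
    PhiStar p s ≤ (Real.exp (s ^ (1 / p)) - 1) * s ∧
      (Real.exp (s ^ (1 / p)) - 1) * s ≤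
        Real.exp ((p / Real.exp 1 + 1) * s ^ (1 / p)) := by
  have hp0 : (0:ℝ) < p := lt_of_lt_of_le one_pos hp
  set u : ℝ := s ^ (1 / p) with hu
  have hu0 : 0 ≤ u := Real.rpow_nonneg hs _
  have hup : u ^ p = s := by
    rw [hu, ← Real.rpow_mul hs, one_div_mul_cancel (ne_of_gt hp0), Real.rpow_one]
  set T : ℝ := Real.exp u - 1 with hT
  have hT0 : 0 ≤ T := by
    have := Real.one_le_exp hu0
    simp [hT]; linarith
  have hlogT : ∀ x : ℝ, T ≤ x → u ≤ Real.log (1 + x) := by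
    intro x hx
    rw [Real.le_log_iff_exp_le (by simp [hT] at hx ⊢; linarith [Real.exp_pos u])]
    simp [hT] at hx; linarith
  -- key pointwise bound
  have hmain : ∀ t : ℝ, 0 ≤ t → s * t - Phi p t ≤ (Real.exp u - 1) * s := by
    intro t ht
    rcases le_total t T with htT | hTt
    · have h1 : 0 ≤ Phi p t := Phi_nonneg p hp ht
      have : s * t ≤ s * T := mul_le_mul_of_nonneg_left htT hs
      nlinarith
    · -- Phi p t ≥ Phi p T + s * (t - T)
      have hint1 : IntervalIntegrable (fun x => Real.log (1 + x) ^ p) volume 0 T :=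
        logp_intInt p hp0.le le_rfl hT0
      have hint2 : IntervalIntegrable (fun x => Real.log (1 + x) ^ p) volume T t :=
        logp_intInt p hp0.le hT0 hTt
      have hadd : Phi p T + ∫ x in T..t, Real.log (1 + x) ^ p = Phi p t := by
        rw [Phi_eq_integral p hp hT0, Phi_eq_integral p hp (le_trans hT0 hTt)]
        exact intervalIntegral.integral_add_adjacent_intervals hint1 hint2
      have hlow : s * (t - T) ≤ ∫ x in T..t, Real.log (1 + x) ^ p := by
        have : ∫ x in T..t, s ≤ ∫ x in T..t, Real.log (1 + x) ^ p := by
          apply intervalIntegral.integral_mono_on hTt (intervalIntegrable_const) hint2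
          intro x hx
          calc s = u ^ p := hup.symm
          _ ≤ Real.log (1 + x) ^ p := Real.rpow_le_rpow hu0 (hlogT x hx.1) hp0.le
        simpa [mul_comm] using this
      have hPT : 0 ≤ Phi p T := Phi_nonneg p hp hT0
      nlinarith
  constructor
  · apply Real.sSup_le
    · rintro a ⟨t, ht, rfl⟩
      exact hmain t ht
    · exact mul_nonneg (by linarith [Real.one_le_exp hu0]) hs
  · -- (e^u - 1) * s ≤ exp ((p/e + 1) u)
    have h1 : u ≤ Real.exp (u / Real.exp 1) := by
      have h2 : (u / Real.exp 1 - 1) + 1 ≤ Real.exp (u / Real.exp 1 - 1) :=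
        Real.add_one_le_exp _
      have h3 : Real.exp (u / Real.exp 1) = Real.exp 1 * Real.exp (u / Real.exp 1 - 1) := by
        rw [← Real.exp_add]; ring_nf
      rw [h3]
      have h4 : Real.exp 1 * (u / Real.exp 1) ≤ Real.exp 1 * Real.exp (u / Real.exp 1 - 1) := by
        apply mul_le_mul_of_nonneg_left _ (Real.exp_pos 1).le
        linarith
      calc u = Real.exp 1 * (u / Real.exp 1) := by
              field_simp
      _ ≤ _ := h4
    have h5 : s ≤ Real.exp (p / Real.exp 1 * u) := by
      calc s = u ^ p := hup.symm
      _ ≤ Real.exp (u / Real.exp 1) ^ p := Real.rpow_le_rpow hu0 h1 hp0.le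
      _ = Real.exp (u / Real.exp 1 * p) := by rw [← Real.exp_mul]
      _ = Real.exp (p / Real.exp 1 * u) := by ring_nf
    have h6 : Real.exp u - 1 ≤ Real.exp u := by linarith
    calc (Real.exp u - 1) * s ≤ Real.exp u * Real.exp (p / Real.exp 1 * u) := by
          apply mul_le_mul h6 h5 hs (Real.exp_pos u).le
    _ = Real.exp ((p / Real.exp 1 + 1) * u) := by rw [← Real.exp_add]; ring_nf
end

section
/- For all real s, t ≥ 0 and p ≥ 1, the inequality st ≤ (1+t)(log(1+t))^p + exp((p/e + 1)·s^{1/p}) holds. -/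
lemma log_le_div_e_aux {u : ℝ} (hu : 0 < u) : Real.log u ≤ u / Real.exp 1 := by
  have h := Real.log_le_sub_one_of_pos (x := u / Real.exp 1) (by positivity)
  rw [Real.log_div (ne_of_gt hu) (Real.exp_ne_zero 1), Real.log_exp] at h
  linarith

theorem young_type_inequality (p s t : ℝ) (hp : 1 ≤ p) (hs : 0 ≤ s) (ht : 0 ≤ t) :
    s * t ≤ (1 + t) * (Real.log (1 + t)) ^ p +
      Real.exp ((p / Real.exp 1 + 1) * s ^ (1 / p)) := by
  have hp0 : 0 < p := lt_of_lt_of_le one_pos hp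
  have hlog : 0 ≤ Real.log (1 + t) := Real.log_nonneg (by linarith)
  rcases le_or_gt s ((Real.log (1 + t)) ^ p) with h | h
  · have h1 : s * t ≤ (1 + t) * (Real.log (1 + t)) ^ p := by
      calc s * t ≤ (Real.log (1 + t)) ^ p * t := mul_le_mul_of_nonneg_right h ht
        _ ≤ (1 + t) * (Real.log (1 + t)) ^ p := by
            rw [mul_comm ((Real.log (1 + t)) ^ p) t]
            exact mul_le_mul_of_nonneg_right (by linarith : t ≤ 1 + t)
              (Real.rpow_nonneg hlog p)
    have := (Real.exp_pos ((p / Real.exp 1 + 1) * s ^ (1 / p))).le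
    linarith
  · have hs0 : 0 < s := lt_of_le_of_lt (Real.rpow_nonneg hlog p) h
    set u := s ^ (1 / p) with hu
    have hu0 : 0 < u := Real.rpow_pos_of_pos hs0 _
    have hup : u ^ p = s := by
      rw [hu, ← Real.rpow_mul hs, one_div_mul_cancel hp0.ne', Real.rpow_one]
    have hlt : Real.log (1 + t) < u := by
      by_contra hc
      push_neg at hc
      have : u ^ p ≤ (Real.log (1 + t)) ^ p :=
        Real.rpow_le_rpow hu0.le hc hp0.le
      rw [hup] at this
      linarith
    have htexp : t < Real.exp u := by
      have := Real.exp_lt_exp.mpr hlt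
      rw [Real.exp_log (by linarith : (0:ℝ) < 1 + t)] at this
      linarith
    have hse : s ≤ Real.exp (p / Real.exp 1 * u) := by
      have hls : Real.log s = p * Real.log u := by
        rw [← hup, Real.log_rpow hu0]
      have h2 : Real.log u ≤ u / Real.exp 1 := log_le_div_e_aux hu0
      have h3 : Real.log s ≤ p / Real.exp 1 * u := by
        rw [hls]
        calc p * Real.log u ≤ p * (u / Real.exp 1) :=
              mul_le_mul_of_nonneg_left h2 hp0.le
          _ = p / Real.exp 1 * u := by ring
      calc s = Real.exp (Real.log s) := (Real.exp_log hs0).symm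
        _ ≤ Real.exp (p / Real.exp 1 * u) := Real.exp_le_exp.mpr h3
    have hmain : s * t ≤ Real.exp ((p / Real.exp 1 + 1) * u) := by
      calc s * t ≤ Real.exp (p / Real.exp 1 * u) * Real.exp u := by
            apply mul_le_mul hse htexp.le ht (Real.exp_pos _).le
        _ = Real.exp ((p / Real.exp 1 + 1) * u) := by
            rw [← Real.exp_add]; ring_nf
    have hnn : 0 ≤ (1 + t) * (Real.log (1 + t)) ^ p :=
      mul_nonneg (by linarith) (Real.rpow_nonneg hlog p)
    linarith
end

section
/- Hölder-type inequality with the pair (Φ_p, exp): for p ≥ 1, a finite measure space (X, μ), measurable f, g : X → [0,∞), and any λ > 0 and r > 1 with conjugate exponent r' = r/(r−1): ∫_X f g dμ ≤ (∫_X Φ_p(f) dμ) / λ + (1/λ) ∫_X exp(c_p (λ g)^{1/p}) dμ, where c_p = p/e + 1 and Φ_p(t) = (1+t)(log(1+t))^p − p∫₀ᵗ(log(1+x))^{p−1}dx. (This follows from Young's inequality f·(λg) ≤ Φ_p(f) + Φ_p*(λg) and the bound Φ_p*(s) ≤ exp(c_p s^{1/p}).) -/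
open MeasureTheory

lemma logpow_intInt (q t1 t2 : ℝ) (hq : 0 ≤ q) (h1 : 0 ≤ t1) (h2 : 0 ≤ t2) :
    IntervalIntegrable (fun x => (Real.log (1 + x)) ^ q) MeasureTheory.volume t1 t2 := by
  apply ContinuousOn.intervalIntegrable
  have hsub : Set.uIcc t1 t2 ⊆ Set.Ici (0:ℝ) := by
    intro x hx
    rcases Set.mem_uIcc.mp hx with h | h
    · exact le_trans h1 h.1
    · exact le_trans h2 h.1
  apply ContinuousOn.rpow_const
  · apply ContinuousOn.log
    · fun_prop
    · intro x hx
      have : (0:ℝ) ≤ x := hsub hx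
      linarith
  · intro x hx
    exact Or.inr hq

lemma phi_eq (p t : ℝ) (hp : 1 ≤ p) (ht : 0 ≤ t) :
    Phi p t = ∫ x in (0:ℝ)..t, (Real.log (1 + x)) ^ p := by
  have hp0 : (0:ℝ) ≤ p := by linarith
  have hp1 : (0:ℝ) ≤ p - 1 := by linarith
  have hderiv : ∀ x ∈ Set.uIcc (0:ℝ) t,
      HasDerivAt (fun y => (1 + y) * (Real.log (1 + y)) ^ p)
        ((Real.log (1 + x)) ^ p + p * (Real.log (1 + x)) ^ (p - 1)) x := by
    intro x hx
    have hx0 : (0:ℝ) ≤ x := by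
      rcases Set.mem_uIcc.mp hx with h | h
      · exact h.1
      · linarith [h.1, ht]
    have h1x : (0:ℝ) < 1 + x := by linarith
    have h1 : HasDerivAt (fun y : ℝ => 1 + y) 1 x := by
      simpa using (hasDerivAt_id x).const_add (1:ℝ)
    have hlog : HasDerivAt (fun y => Real.log (1 + y)) (1 / (1 + x)) x :=
      h1.log (ne_of_gt h1x)
    have hrpow : HasDerivAt (fun y => (Real.log (1 + y)) ^ p)
        ((p * (Real.log (1 + x)) ^ (p - 1)) * (1 / (1 + x))) x :=
      (Real.hasDerivAt_rpow_const (Or.inr hp)).comp x hlog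
    have := h1.mul hrpow
    refine this.congr_deriv ?_
    have hne : (1 + x) ≠ 0 := ne_of_gt h1x
    rw [one_mul, mul_one_div, mul_div_cancel₀ _ hne]
  have hInt1 := logpow_intInt p 0 t hp0 le_rfl ht
  have hInt2 := logpow_intInt (p-1) 0 t hp1 le_rfl ht
  have hftc := intervalIntegral.integral_eq_sub_of_hasDerivAt hderiv
    (hInt1.add (hInt2.const_mul p))
  rw [intervalIntegral.integral_add hInt1 (hInt2.const_mul p),
      intervalIntegral.integral_const_mul] at hftc
  simp only [Real.log_one, add_zero] at hftc
  rw [Real.zero_rpow (by linarith : p ≠ 0)] at hftc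
  unfold Phi
  rw [show (1 + t) * Real.log (1 + t) ^ p
      = (∫ x in (0:ℝ)..t, Real.log (1 + x) ^ p) + p * ∫ x in (0:ℝ)..t, Real.log (1 + x) ^ (p-1) by
    linarith [hftc]]
  ring

lemma phi_nonneg (p t : ℝ) (hp : 1 ≤ p) (ht : 0 ≤ t) : 0 ≤ Phi p t := by
  rw [phi_eq p t hp ht]
  apply intervalIntegral.integral_nonneg ht
  intro x hx
  exact Real.rpow_nonneg (Real.log_nonneg (by linarith [hx.1])) p

lemma young_key (p t s : ℝ) (hp : 1 ≤ p) (ht : 0 ≤ t) (hs : 0 ≤ s) :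
    t * s ≤ Phi p t + Real.exp ((p / Real.exp 1 + 1) * s ^ (1 / p)) := by
  have hp0 : (0:ℝ) < p := by linarith
  set u : ℝ := s ^ (1 / p) with hu_def
  have hu : 0 ≤ u := Real.rpow_nonneg hs _
  have hup : u ^ p = s := by
    rw [hu_def, one_div, Real.rpow_inv_rpow hs (ne_of_gt hp0)]
  set T : ℝ := Real.exp u - 1 with hT_def
  have hT : 0 ≤ T := by
    have := Real.one_le_exp hu
    simp [hT_def]; linarith
  -- Step 1: t * s ≤ Phi p t + s * T
  have step1 : t * s ≤ Phi p t + s * T := by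
    rcases le_total t T with h | h
    · have : t * s ≤ s * T := by nlinarith
      linarith [phi_nonneg p t hp ht]
    · -- T ≤ t
      have hPhi : Phi p t = (∫ x in (0:ℝ)..T, (Real.log (1 + x)) ^ p)
          + ∫ x in T..t, (Real.log (1 + x)) ^ p := by
        rw [phi_eq p t hp ht,
          ← intervalIntegral.integral_add_adjacent_intervals
            (logpow_intInt p 0 T (by linarith) le_rfl hT)
            (logpow_intInt p T t (by linarith) hT (by linarith))]
      have h1 : 0 ≤ ∫ x in (0:ℝ)..T, (Real.log (1 + x)) ^ p := by
        apply intervalIntegral.integral_nonneg hT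
        intro x hx
        exact Real.rpow_nonneg (Real.log_nonneg (by linarith [hx.1])) p
      have h2 : s * (t - T) ≤ ∫ x in T..t, (Real.log (1 + x)) ^ p := by
        have := intervalIntegral.integral_mono_on h
          (intervalIntegrable_const (c := s))
          (logpow_intInt p T t (by linarith) hT (by linarith))
          (fun x hx => by
            have hxT : T ≤ x := hx.1
            have hlx : u ≤ Real.log (1 + x) := by
              have h1x : Real.exp u ≤ 1 + x := by simp [hT_def] at hxT ⊢; linarith
              calc u = Real.log (Real.exp u) := (Real.log_exp u).symm
                _ ≤ Real.log (1 + x) := Real.log_le_log (Real.exp_pos u) h1x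
            calc s = u ^ p := hup.symm
              _ ≤ (Real.log (1 + x)) ^ p := Real.rpow_le_rpow hu hlx (le_of_lt hp0))
        rw [intervalIntegral.integral_const] at this
        rw [mul_comm]
        simpa [smul_eq_mul] using this
      nlinarith
  -- Step 2: s * T ≤ exp ((p/e + 1) * u)
  have step2 : s * T ≤ Real.exp ((p / Real.exp 1 + 1) * u) := by
    have hsT : s * T ≤ u ^ p * Real.exp u := by
      rw [hup]
      have : T ≤ Real.exp u := by rw [hT_def]; linarith
      nlinarith [Real.exp_pos u]
    have hue : u ≤ Real.exp (u / Real.exp 1) := by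
      have he : (0:ℝ) < Real.exp 1 := Real.exp_pos 1
      have h := Real.add_one_le_exp (u / Real.exp 1 - 1)
      have h' : u / Real.exp 1 ≤ Real.exp (u / Real.exp 1 - 1) := by linarith
      have hmul := mul_le_mul_of_nonneg_right h' he.le
      have hdiv : u / Real.exp 1 * Real.exp 1 = u := div_mul_cancel₀ u he.ne'
      have hexp : Real.exp (u / Real.exp 1 - 1) * Real.exp 1 = Real.exp (u / Real.exp 1) := by
        rw [← Real.exp_add]; norm_num
      linarith
    have hup2 : u ^ p ≤ Real.exp (p / Real.exp 1 * u) := by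
      calc u ^ p ≤ (Real.exp (u / Real.exp 1)) ^ p :=
            Real.rpow_le_rpow hu hue (le_of_lt hp0)
        _ = Real.exp (u / Real.exp 1 * p) := by
            rw [Real.rpow_def_of_pos (Real.exp_pos _), Real.log_exp]
        _ = Real.exp (p / Real.exp 1 * u) := by ring_nf
    calc s * T ≤ u ^ p * Real.exp u := hsT
      _ ≤ Real.exp (p / Real.exp 1 * u) * Real.exp u := by
          nlinarith [Real.exp_pos u, Real.rpow_nonneg hu p]
      _ = Real.exp ((p / Real.exp 1 + 1) * u) := by rw [← Real.exp_add]; ring_nf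
  exact step1.trans (add_le_add_right step2 (Phi p t))

theorem holder_type_inequality {X : Type*} [MeasurableSpace X]
    (μ : Measure X) [IsFiniteMeasure μ] (p lam r : ℝ)
    (hp : 1 ≤ p) (hlam : 0 < lam) (hr : 1 < r)
    (f g : X → ℝ) (hf0 : ∀ x, 0 ≤ f x) (hg0 : ∀ x, 0 ≤ g x)
    (hfm : Measurable f) (hgm : Measurable g)
    (hΦ : Integrable (fun x => Phi p (f x)) μ)
    (hE : Integrable
      (fun x => Real.exp ((p / Real.exp 1 + 1) * (lam * g x) ^ (1 / p))) μ) :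
    ∫ x, f x * g x ∂μ ≤ (∫ x, Phi p (f x) ∂μ) / lam +
      (1 / lam) * ∫ x, Real.exp ((p / Real.exp 1 + 1) * (lam * g x) ^ (1 / p)) ∂μ := by
  have hpt : ∀ x, f x * g x ≤
      (Phi p (f x) + Real.exp ((p / Real.exp 1 + 1) * (lam * g x) ^ (1 / p))) / lam := by
    intro x
    have hkey := young_key p (f x) (lam * g x) hp (hf0 x)
      (mul_nonneg (le_of_lt hlam) (hg0 x))
    rw [le_div_iff₀ hlam]
    calc f x * g x * lam = f x * (lam * g x) := by ring
      _ ≤ _ := hkey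
  have hInt : Integrable (fun x =>
      (Phi p (f x) + Real.exp ((p / Real.exp 1 + 1) * (lam * g x) ^ (1 / p))) / lam) μ :=
    (hΦ.add hE).div_const lam
  have hmono := integral_mono_of_nonneg
    (Filter.Eventually.of_forall (fun x => mul_nonneg (hf0 x) (hg0 x)))
    hInt (Filter.Eventually.of_forall hpt)
  calc ∫ x, f x * g x ∂μ ≤ _ := hmono
    _ = (∫ x, (Phi p (f x) + Real.exp ((p / Real.exp 1 + 1) * (lam * g x) ^ (1 / p))) ∂μ) / lam := by
        rw [integral_div]
    _ = ((∫ x, Phi p (f x) ∂μ) + ∫ x, Real.exp ((p / Real.exp 1 + 1) * (lam * g x) ^ (1 / p)) ∂μ) / lam := by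
        rw [integral_add hΦ hE]
    _ = (∫ x, Phi p (f x) ∂μ) / lam +
      (1 / lam) * ∫ x, Real.exp ((p / Real.exp 1 + 1) * (lam * g x) ^ (1 / p)) ∂μ := by
        field_simp
end
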